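/- If A ∈ B(ℓ^q, ℓᵖ) and G ∈ B(ℓᵖ, ℓ^q) with 1 ≤ p ≠ q < ∞ satisfy G A = id on ℓ^q, then a contradiction results; i.e., the identity on ℓ^q does not factor through ℓᵖ via bounded operators when p ≠ q. -/

import Mathlib

open ContinuousLinearMap Filter Finset
open scoped ENNReal


namespace NoFactAux

variable {p : ℝ≥0∞} [Fact (1 ≤ p)]

omit [Fact (1 ≤ p)] in
lemma trunc_apply (T : Finset ℕ) (f : ℕ → ℂ) (j : ℕ) :
    (↑(∑ i ∈ T, lp.single p i (f i)) : ∀ _ : ℕ, ℂ) j = if j ∈ T then f j else 0 := by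
  rw [lp.coeFn_sum, Finset.sum_apply]
  simp [lp.single_apply, Pi.single_apply]

omit [Fact (1 ≤ p)] in
lemma disjoint_sum_norm (hr : 0 < p.toReal) (K : ℕ)
    (v : ℕ → lp (fun _ : ℕ => ℂ) p) (S : ℕ → Finset ℕ)
    (hdisj : ∀ k < K, ∀ l < K, k ≠ l → Disjoint (S k) (S l))
    (hsupp : ∀ k < K, v k = ∑ i ∈ S k, lp.single p i ((v k : ∀ _ : ℕ, ℂ) i)) :
    ‖∑ k ∈ Finset.range K, v k‖ ^ p.toReal = ∑ k ∈ Finset.range K, ‖v k‖ ^ p.toReal := by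
  set V := ∑ k ∈ Finset.range K, v k with hVdef
  have hpd : Set.PairwiseDisjoint ↑(Finset.range K) S := by
    intro a ha b hb hab
    exact hdisj a (Finset.mem_range.1 ha) b (Finset.mem_range.1 hb) hab
  have hvco : ∀ l, l < K → ∀ i : ℕ, i ∉ S l → (v l : ∀ _ : ℕ, ℂ) i = 0 := by
    intro l hl i hi
    calc (v l : ∀ _ : ℕ, ℂ) i
        = (↑(∑ i' ∈ S l, lp.single p i' ((v l : ∀ _ : ℕ, ℂ) i')) : ∀ _ : ℕ, ℂ) i := by
          rw [← hsupp l hl]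
      _ = 0 := by rw [trunc_apply, if_neg hi]
  have hco : ∀ k, k < K → ∀ i ∈ S k, (V : ∀ _ : ℕ, ℂ) i = (v k : ∀ _ : ℕ, ℂ) i := by
    intro k hk i hi
    have h1 : (V : ∀ _ : ℕ, ℂ) i = ∑ l ∈ Finset.range K, (v l : ∀ _ : ℕ, ℂ) i := by
      rw [hVdef, lp.coeFn_sum, Finset.sum_apply]
    rw [h1]
    refine Finset.sum_eq_single k ?_ (fun hk' => absurd (Finset.mem_range.2 hk) hk')
    intro l hl hlk
    refine hvco l (Finset.mem_range.1 hl) i ?_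
    exact Finset.disjoint_left.1 (hdisj k hk l (Finset.mem_range.1 hl) (Ne.symm hlk)) hi
  have hV : V = ∑ i ∈ (Finset.range K).biUnion S, lp.single p i ((V : ∀ _ : ℕ, ℂ) i) := by
    rw [Finset.sum_biUnion hpd, hVdef]
    refine Finset.sum_congr rfl ?_
    intro k hk
    rw [hsupp k (Finset.mem_range.1 hk)]
    refine Finset.sum_congr rfl fun i hi => ?_
    rw [hco k (Finset.mem_range.1 hk) i hi]
  calc ‖V‖ ^ p.toReal
      = ‖∑ i ∈ (Finset.range K).biUnion S, lp.single p i ((V : ∀ _ : ℕ, ℂ) i)‖ ^ p.toReal := by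
        rw [← hV]
    _ = ∑ i ∈ (Finset.range K).biUnion S, ‖(V : ∀ _ : ℕ, ℂ) i‖ ^ p.toReal :=
        lp.norm_sum_single hr _ _
    _ = ∑ k ∈ Finset.range K, ∑ i ∈ S k, ‖(V : ∀ _ : ℕ, ℂ) i‖ ^ p.toReal :=
        Finset.sum_biUnion hpd
    _ = ∑ k ∈ Finset.range K, ‖v k‖ ^ p.toReal := by
        refine Finset.sum_congr rfl fun k hk => ?_
        have hk' := Finset.mem_range.1 hk
        calc ∑ i ∈ S k, ‖(V : ∀ _ : ℕ, ℂ) i‖ ^ p.toReal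
            = ∑ i ∈ S k, ‖(v k : ∀ _ : ℕ, ℂ) i‖ ^ p.toReal :=
              Finset.sum_congr rfl fun i hi => by rw [hco k hk' i hi]
          _ = ‖∑ i ∈ S k, lp.single p i ((v k : ∀ _ : ℕ, ℂ) i)‖ ^ p.toReal :=
              (lp.norm_sum_single hr _ _).symm
          _ = ‖v k‖ ^ p.toReal := by rw [← hsupp k hk']

end NoFactAux


namespace NoFactAux2

variable {p : ℝ≥0∞} [Fact (1 ≤ p)]

lemma exists_glide (hp : p ≠ ∞) (w : ℕ → lp (fun _ : ℕ => ℂ) p)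
    (hw : ∀ j : ℕ, Tendsto (fun n => (w n : ∀ _ : ℕ, ℂ) j) atTop (nhds 0))
    (ε : ℕ → ℝ) (hε : ∀ k, 0 < ε k) :
    ∃ (m : ℕ → ℕ) (S : ℕ → Finset ℕ), StrictMono m ∧
      (∀ k l, k < l → Disjoint (S k) (S l)) ∧
      ∀ k, ‖w (m k) - ∑ i ∈ S k, lp.single p i ((w (m k) : ∀ _ : ℕ, ℂ) i)‖ ≤ ε k := by
  have hr : 0 < p.toReal :=
    ENNReal.toReal_pos (lt_of_lt_of_le zero_lt_one Fact.out).ne' hp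
  have key : ∀ (k a : ℕ) (U : Finset ℕ), ∃ (n : ℕ) (S : Finset ℕ), a < n ∧ Disjoint S U ∧
      ‖w n - ∑ i ∈ S, lp.single p i ((w n : ∀ _ : ℕ, ℂ) i)‖ ≤ ε k := by
    intro k a U
    have hεr : 0 < ε k ^ p.toReal / 2 := div_pos (Real.rpow_pos_of_pos (hε k) _) two_pos
    have h1 : Tendsto (fun n => ∑ i ∈ U, ‖(w n : ∀ _ : ℕ, ℂ) i‖ ^ p.toReal) atTop (nhds 0) := by
      have h2 : ∀ i ∈ U, Tendsto (fun n => ‖(w n : ∀ _ : ℕ, ℂ) i‖ ^ p.toReal) atTop (nhds 0) := by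
        intro i _
        have h3 : Tendsto (fun n => ‖(w n : ∀ _ : ℕ, ℂ) i‖) atTop (nhds 0) := by
          simpa using (hw i).norm
        have h4 := h3.rpow_const (p := p.toReal) (Or.inr hr.le)
        simpa [Real.zero_rpow hr.ne'] using h4
      simpa using tendsto_finset_sum U h2
    obtain ⟨n, hn1, hn2⟩ : ∃ n, a < n ∧
        ∑ i ∈ U, ‖(w n : ∀ _ : ℕ, ℂ) i‖ ^ p.toReal < ε k ^ p.toReal / 2 :=
      ((eventually_gt_atTop a).and (h1.eventually (eventually_lt_nhds hεr))).exists
    have h2 := lp.hasSum_norm hr (w n)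
    obtain ⟨S₀, hS₀⟩ : ∃ S₀ : Finset ℕ,
        ‖w n‖ ^ p.toReal - ε k ^ p.toReal / 2 < ∑ i ∈ S₀, ‖(w n : ∀ _ : ℕ, ℂ) i‖ ^ p.toReal :=
      (h2.eventually (eventually_gt_nhds (by linarith))).exists
    refine ⟨n, S₀ \ U, hn1, Finset.sdiff_disjoint, ?_⟩
    have h3 := lp.norm_compl_sum_single hr (w n) (S₀ \ U)
    have hnn : ∀ i : ℕ, 0 ≤ ‖(w n : ∀ _ : ℕ, ℂ) i‖ ^ p.toReal := fun i => by positivity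
    have h4 : ∑ i ∈ S₀, ‖(w n : ∀ _ : ℕ, ℂ) i‖ ^ p.toReal ≤
        ∑ i ∈ S₀ \ U, ‖(w n : ∀ _ : ℕ, ℂ) i‖ ^ p.toReal +
        ∑ i ∈ U, ‖(w n : ∀ _ : ℕ, ℂ) i‖ ^ p.toReal := by
      rw [← Finset.sum_union Finset.sdiff_disjoint]
      refine Finset.sum_le_sum_of_subset_of_nonneg ?_ (fun i _ _ => hnn i)
      intro i hi
      rw [Finset.mem_union, Finset.mem_sdiff]
      by_cases h : i ∈ U
      · exact Or.inr h
      · exact Or.inl ⟨hi, h⟩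
    have h5 : ‖w n - ∑ i ∈ S₀ \ U, lp.single p i ((w n : ∀ _ : ℕ, ℂ) i)‖ ^ p.toReal ≤
        ε k ^ p.toReal := by
      rw [h3]; linarith
    by_contra hcon
    push_neg at hcon
    exact absurd h5 (not_le.2 (Real.rpow_lt_rpow (hε k).le hcon hr))
  choose nf Sf hnf hSdisj hSbound using key
  set st : ℕ → ℕ × Finset ℕ := fun k =>
    Nat.rec ((0 : ℕ), (∅ : Finset ℕ))
      (fun k ih => (nf k ih.1 ih.2, ih.2 ∪ Sf k ih.1 ih.2)) k with hst
  have hst_succ : ∀ k, st (k + 1) =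
      (nf k (st k).1 (st k).2, (st k).2 ∪ Sf k (st k).1 (st k).2) := fun k => rfl
  refine ⟨fun k => (st (k + 1)).1, fun k => Sf k (st k).1 (st k).2, ?_, ?_, ?_⟩
  · refine strictMono_nat_of_lt_succ fun k => ?_
    exact hnf (k + 1) (st (k + 1)).1 (st (k + 1)).2
  · have hmono : ∀ k l, k ≤ l → (st k).2 ⊆ (st l).2 := by
      intro k l hkl
      induction l, hkl using Nat.le_induction with
      | base => exact subset_rfl
      | succ l hkl ih =>
        refine ih.trans ?_
        rw [hst_succ l]
        exact Finset.subset_union_left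
    intro k l hkl
    have h1 : Sf k (st k).1 (st k).2 ⊆ (st l).2 := by
      refine Finset.Subset.trans ?_ (hmono (k + 1) l hkl)
      rw [hst_succ k]
      exact Finset.subset_union_right
    exact (Finset.disjoint_of_subset_right h1 (hSdisj l (st l).1 (st l).2)).symm
  · intro k
    exact hSbound k (st k).1 (st k).2

end NoFactAux2


namespace NoFactAux3

lemma no_poly_bound {a b C : ℝ} (hb : 0 < b) (hab : b < a)
    (h : ∀ K : ℕ, 1 ≤ K → (K:ℝ) ^ a ≤ C * (K:ℝ) ^ b + C) : False := by
  have hδ : 0 < a - b := by linarith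
  have htendsto : Tendsto (fun n : ℕ => (n:ℝ) ^ (a - b)) atTop atTop :=
    (tendsto_rpow_atTop hδ).comp tendsto_natCast_atTop_atTop
  obtain ⟨K, hK1, hK2⟩ :=
    ((eventually_ge_atTop 1).and (htendsto.eventually_gt_atTop (2 * C))).exists
  have hKpos : (0:ℝ) < K := by exact_mod_cast hK1
  have hK1' : (1:ℝ) ≤ (K:ℝ) := by exact_mod_cast hK1
  have hKb : (1:ℝ) ≤ (K:ℝ) ^ b := Real.one_le_rpow hK1' hb.le
  have hC : 0 < C := by
    have h3 := h 1 le_rfl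
    simp [Real.one_rpow] at h3
    linarith
  have h1 : (K:ℝ) ^ a = (K:ℝ) ^ (a - b) * (K:ℝ) ^ b := by
    rw [← Real.rpow_add hKpos]; ring_nf
  have h4 : (K:ℝ) ^ (a - b) * (K:ℝ) ^ b ≤ (2 * C) * (K:ℝ) ^ b := by
    rw [← h1]
    calc (K:ℝ) ^ a ≤ C * (K:ℝ) ^ b + C := h K hK1
      _ ≤ C * (K:ℝ) ^ b + C * (K:ℝ) ^ b := by nlinarith
      _ = 2 * C * (K:ℝ) ^ b := by ring
  have h5 : (K:ℝ) ^ (a - b) ≤ 2 * C :=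
    le_of_mul_le_mul_right h4 (lt_of_lt_of_le zero_lt_one hKb)
  linarith

end NoFactAux3

namespace NoFactAux3

lemma sandwich {t x lo hi : ℝ} (ht : 0 < t) (hx : 0 ≤ x) (hlo : 0 ≤ lo) (hhi : 0 ≤ hi) (K : ℕ)
    (h1 : (K:ℝ) * lo ^ t ≤ x ^ t) (h2 : x ^ t ≤ (K:ℝ) * hi ^ t) :
    lo * (K:ℝ) ^ (1/t) ≤ x ∧ x ≤ hi * (K:ℝ) ^ (1/t) := by
  have hK0 : (0:ℝ) ≤ (K:ℝ) := Nat.cast_nonneg K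
  have hxt : x = (x ^ t) ^ (1/t) := by
    rw [one_div, Real.rpow_rpow_inv hx ht.ne']
  constructor
  · have h3 : ((K:ℝ) * lo ^ t) ^ (1/t) ≤ (x ^ t) ^ (1/t) :=
      Real.rpow_le_rpow (by positivity) h1 (by positivity)
    rw [Real.mul_rpow hK0 (by positivity), one_div, Real.rpow_rpow_inv hlo ht.ne'] at h3
    rw [hxt]
    calc lo * (K:ℝ) ^ (1/t) = (K:ℝ) ^ (1/t) * lo := mul_comm _ _
      _ ≤ (x ^ t) ^ (1/t) := by rw [one_div]; exact h3
  · have h3 : (x ^ t) ^ (1/t) ≤ ((K:ℝ) * hi ^ t) ^ (1/t) :=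
      Real.rpow_le_rpow (by positivity) h2 (by positivity)
    rw [Real.mul_rpow hK0 (by positivity), one_div, Real.rpow_rpow_inv hhi ht.ne'] at h3
    rw [hxt]
    calc (x ^ t) ^ (1/t) ≤ (K:ℝ) ^ t⁻¹ * hi := by rw [one_div]; exact h3
      _ = hi * (K:ℝ) ^ (1/t) := by rw [one_div]; ring

end NoFactAux3


set_option maxHeartbeats 2000000 in
/-- For `1 ≤ p ≠ q < ∞`, the identity on `ℓ^q` does not factor through
`ℓᵖ`: there are no bounded operators `A : ℓ^q → ℓᵖ` and `G : ℓᵖ → ℓ^q` with `G A = id`. -/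
theorem no_factorization_of_id_through_lp
    (p q : ℝ≥0∞) [Fact (1 ≤ p)] [Fact (1 ≤ q)] (hp : p < ⊤) (hq : q < ⊤) (hpq : p ≠ q)
    (A : lp (fun _ : ℕ => ℂ) q →L[ℂ] lp (fun _ : ℕ => ℂ) p)
    (G : lp (fun _ : ℕ => ℂ) p →L[ℂ] lp (fun _ : ℕ => ℂ) q)
    (h : G ∘L A = ContinuousLinearMap.id ℂ (lp (fun _ : ℕ => ℂ) q)) :
    False := by
  classical
  have hp1 : (1:ℝ≥0∞) ≤ p := Fact.out
  have hq1 : (1:ℝ≥0∞) ≤ q := Fact.out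
  have hp0 : p ≠ 0 := (lt_of_lt_of_le zero_lt_one hp1).ne'
  have hq0 : q ≠ 0 := (lt_of_lt_of_le zero_lt_one hq1).ne'
  have hr : 0 < p.toReal := ENNReal.toReal_pos hp0 hp.ne
  have hs : 0 < q.toReal := ENNReal.toReal_pos hq0 hq.ne
  have hrs : p.toReal ≠ q.toReal := by
    intro h'
    exact hpq ((ENNReal.toReal_eq_toReal_iff' hp.ne hq.ne).1 h')
  have hGA : ∀ x, G (A x) = x := by
    intro x
    have h1 := congrArg (fun T => T x) h
    simpa using h1
  set e : ℕ → lp (fun _ : ℕ => ℂ) q := fun n => lp.single q n (1 : ℂ) with he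
  have he_norm : ∀ n, ‖e n‖ = 1 := by
    intro n
    simpa using lp.norm_single (E := fun _ : ℕ => ℂ) (lt_of_lt_of_le zero_lt_one hq1) n (1:ℂ)
  have hA0 : 0 ≤ ‖A‖ := norm_nonneg _
  have hG : 0 < ‖G‖ := by
    rcases (norm_nonneg G).lt_or_eq with h' | h'
    · exact h'
    · exfalso
      have h1 : ‖e 0‖ ≤ ‖G‖ * ‖A (e 0)‖ := by
        conv_lhs => rw [← hGA (e 0)]
        exact G.le_opNorm _
      rw [he_norm, ← h'] at h1
      norm_num at h1
  set c : ℝ := ‖G‖⁻¹ with hc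
  have hc0 : 0 < c := inv_pos.2 hG
  have hcG : c * ‖G‖ = 1 := inv_mul_cancel₀ hG.ne'
  set u : ℕ → lp (fun _ : ℕ => ℂ) p := fun n => A (e n) with hu
  have hu_mem : ∀ n, (↑(u n) : ℕ → ℂ) ∈
      Set.pi Set.univ (fun _ : ℕ => Metric.closedBall (0:ℂ) ‖A‖) := by
    intro n
    rw [Set.mem_univ_pi]
    intro j
    rw [Metric.mem_closedBall, dist_zero_right]
    calc ‖(↑(u n) : ℕ → ℂ) j‖ ≤ ‖u n‖ := lp.norm_apply_le_norm hp0 _ _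
      _ ≤ ‖A‖ * ‖e n‖ := A.le_opNorm _
      _ = ‖A‖ := by rw [he_norm, mul_one]
  obtain ⟨L, -, φ, hφ, hconv⟩ :=
    (isCompact_univ_pi (fun _ : ℕ => isCompact_closedBall (0:ℂ) ‖A‖)).tendsto_subseq hu_mem
  have hconv' : ∀ j, Tendsto (fun k => (↑(u (φ k)) : ℕ → ℂ) j) atTop (nhds (L j)) := by
    intro j
    have h1 := tendsto_pi_nhds.1 hconv j
    exact h1
  set d : ℕ → lp (fun _ : ℕ => ℂ) q :=
    fun k => e (φ (2*k+1)) - e (φ (2*k)) with hd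
  set w : ℕ → lp (fun _ : ℕ => ℂ) p := fun k => A (d k) with hw
  have hwu : ∀ k, w k = u (φ (2*k+1)) - u (φ (2*k)) := by
    intro k
    rw [hw, hd, hu]
    simp [map_sub]
  have hGw : ∀ k, G (w k) = d k := fun k => hGA (d k)
  have h2k : Tendsto (fun k : ℕ => 2*k) atTop atTop := by
    apply tendsto_atTop_atTop_of_monotone
    · intro a b hab; dsimp only; omega
    · intro b; exact ⟨b, by omega⟩
  have h2k1 : Tendsto (fun k : ℕ => 2*k+1) atTop atTop := by
    apply tendsto_atTop_atTop_of_monotone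
    · intro a b hab; dsimp only; omega
    · intro b; exact ⟨b, by omega⟩
  have hw_null : ∀ j, Tendsto (fun k => (↑(w k) : ℕ → ℂ) j) atTop (nhds 0) := by
    intro j
    have h1 : Tendsto (fun k => (↑(u (φ (2*k+1))) : ℕ → ℂ) j) atTop (nhds (L j)) :=
      (hconv' j).comp h2k1
    have h2 : Tendsto (fun k => (↑(u (φ (2*k))) : ℕ → ℂ) j) atTop (nhds (L j)) :=
      (hconv' j).comp h2k
    have h3 := h1.sub h2
    rw [sub_self] at h3
    refine h3.congr fun k => ?_
    rw [hwu k]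
    simp [lp.coeFn_sub]
  have hab : ∀ k, φ (2*k) ≠ φ (2*k+1) := by
    intro k hcon
    have := hφ.injective hcon
    omega
  have hd_coord1 : ∀ k, (↑(d k) : ℕ → ℂ) (φ (2*k+1)) = 1 := by
    intro k
    rw [hd]
    simp only [lp.coeFn_sub, Pi.sub_apply, he]
    rw [lp.single_apply_self, lp.single_apply_ne q _ _ (Ne.symm (hab k))]
    simp
  have hd_coord2 : ∀ k, (↑(d k) : ℕ → ℂ) (φ (2*k)) = -1 := by
    intro k
    rw [hd]
    simp only [lp.coeFn_sub, Pi.sub_apply, he]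
    rw [lp.single_apply_self, lp.single_apply_ne q _ _ (hab k)]
    simp
  have hd_le : ∀ k, ‖d k‖ ≤ 2 := by
    intro k
    calc ‖d k‖ ≤ ‖e (φ (2*k+1))‖ + ‖e (φ (2*k))‖ := norm_sub_le _ _
      _ = 2 := by rw [he_norm, he_norm]; norm_num
  have hd_ge : ∀ k, 1 ≤ ‖d k‖ := by
    intro k
    calc (1:ℝ) = ‖(↑(d k) : ℕ → ℂ) (φ (2*k+1))‖ := by rw [hd_coord1]; simp
      _ ≤ ‖d k‖ := lp.norm_apply_le_norm hq0 _ _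
  have hw_le : ∀ k, ‖w k‖ ≤ 2 * ‖A‖ := by
    intro k
    calc ‖w k‖ ≤ ‖A‖ * ‖d k‖ := A.le_opNorm _
      _ ≤ ‖A‖ * 2 := by nlinarith [hd_le k]
      _ = 2 * ‖A‖ := by ring
  have hw_ge : ∀ k, c ≤ ‖w k‖ := by
    intro k
    have h1 : ‖d k‖ ≤ ‖G‖ * ‖w k‖ := by
      conv_lhs => rw [← hGw k]
      exact G.le_opNorm _
    have h2 : 1 ≤ ‖G‖ * ‖w k‖ := (hd_ge k).trans h1
    nlinarith [hc0, norm_nonneg (w k)]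
  obtain ⟨m, S, hm, hSdisj, happrox⟩ := NoFactAux2.exists_glide hp.ne w hw_null
      (fun k => c/8 * (1/2)^k) (fun k => by positivity)
  set v : ℕ → lp (fun _ : ℕ => ℂ) p :=
    fun k => ∑ i ∈ S k, lp.single p i ((↑(w (m k)) : ℕ → ℂ) i) with hv
  have hε_le : ∀ k : ℕ, c/8 * (1/2:ℝ)^k ≤ c/8 := by
    intro k
    have h1 : ((1:ℝ)/2)^k ≤ 1 := pow_le_one₀ (by norm_num) (by norm_num)
    nlinarith
  have hv_near : ∀ k, ‖w (m k) - v k‖ ≤ c/8 := fun k => (happrox k).trans (hε_le k)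
  have hv_ge : ∀ k, c/2 ≤ ‖v k‖ := by
    intro k
    have h1 := hv_near k
    have h2 := hw_ge (m k)
    have h3 : ‖w (m k)‖ - ‖v k‖ ≤ ‖w (m k) - v k‖ := norm_sub_norm_le _ _
    linarith
  have hv_le : ∀ k, ‖v k‖ ≤ 2*‖A‖ + c := by
    intro k
    have h1 := hv_near k
    have h2 := hw_le (m k)
    have h3 : ‖v k‖ - ‖w (m k)‖ ≤ ‖w (m k) - v k‖ := by
      rw [norm_sub_rev]
      exact norm_sub_norm_le _ _
    linarith
  set P : ℕ → Finset ℕ := fun k => {φ (2*(m k)), φ (2*(m k)+1)} with hP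
  have hd_supp : ∀ k, d (m k) = ∑ i ∈ P k, lp.single q i ((↑(d (m k)) : ℕ → ℂ) i) := by
    intro k
    rw [hP]
    rw [Finset.sum_pair (hab (m k))]
    rw [hd_coord1 (m k), hd_coord2 (m k)]
    rw [hd]
    simp only [lp.single_neg]
    abel
  have hP_disj : ∀ k l, k ≠ l → Disjoint (P k) (P l) := by
    intro k l hkl
    rw [hP, Finset.disjoint_left]
    intro i hi hil
    simp only [Finset.mem_insert, Finset.mem_singleton] at hi hil
    have hml : m k ≠ m l := fun hcon => hkl (hm.injective hcon)
    rcases hi with hi | hi <;> rcases hil with hil | hil <;>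
      · rw [hi] at hil
        have := hφ.injective hil
        omega
  have main : ∀ K : ℕ, 1 ≤ K →
      c/2 * (K:ℝ)^(1/p.toReal) - c/4 ≤ 2*‖A‖*(K:ℝ)^(1/q.toReal) ∧
      (K:ℝ)^(1/q.toReal) ≤ ‖G‖ * ((2*‖A‖+c) * (K:ℝ)^(1/p.toReal) + c/4) := by
    intro K _
    set D : lp (fun _ : ℕ => ℂ) q := ∑ k ∈ Finset.range K, d (m k) with hD
    set W : lp (fun _ : ℕ => ℂ) p := ∑ k ∈ Finset.range K, w (m k) with hW
    set V : lp (fun _ : ℕ => ℂ) p := ∑ k ∈ Finset.range K, v k with hV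
    have hWD : W = A D := by
      rw [hW, hD, map_sum]
    have hGW : G W = D := by rw [hWD, hGA]
    -- ‖D‖ bounds
    have hDnorm : ‖D‖ ^ q.toReal = ∑ k ∈ Finset.range K, ‖d (m k)‖ ^ q.toReal := by
      refine NoFactAux.disjoint_sum_norm hs K (fun k => d (m k)) P ?_ ?_
      · intro k _ l _ hkl
        exact hP_disj k l hkl
      · intro k _
        exact hd_supp k
    have hDlow : (K:ℝ) * (1:ℝ) ^ q.toReal ≤ ‖D‖ ^ q.toReal := by
      rw [hDnorm]
      have h1 : ∀ k ∈ Finset.range K, (1:ℝ) ^ q.toReal ≤ ‖d (m k)‖ ^ q.toReal := fun k _ =>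
        Real.rpow_le_rpow (by norm_num) (hd_ge (m k)) hs.le
      calc (K:ℝ) * (1:ℝ) ^ q.toReal
          = (Finset.range K).card • ((1:ℝ) ^ q.toReal) := by
            rw [Finset.card_range, nsmul_eq_mul]
        _ ≤ _ := Finset.card_nsmul_le_sum _ _ _ h1
    have hDhigh : ‖D‖ ^ q.toReal ≤ (K:ℝ) * (2:ℝ) ^ q.toReal := by
      rw [hDnorm]
      have h1 : ∀ k ∈ Finset.range K, ‖d (m k)‖ ^ q.toReal ≤ (2:ℝ) ^ q.toReal := fun k _ =>
        Real.rpow_le_rpow (norm_nonneg _) (hd_le (m k)) hs.le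
      calc ∑ k ∈ Finset.range K, ‖d (m k)‖ ^ q.toReal
          ≤ (Finset.range K).card • ((2:ℝ) ^ q.toReal) := Finset.sum_le_card_nsmul _ _ _ h1
        _ = (K:ℝ) * (2:ℝ) ^ q.toReal := by rw [Finset.card_range, nsmul_eq_mul]
    obtain ⟨hD_ge, hD_le⟩ := NoFactAux3.sandwich hs (norm_nonneg D) (by norm_num : (0:ℝ) ≤ 1)
      (by norm_num : (0:ℝ) ≤ 2) K hDlow hDhigh
    rw [one_mul] at hD_ge
    -- ‖V‖ bounds
    have hVnorm : ‖V‖ ^ p.toReal = ∑ k ∈ Finset.range K, ‖v k‖ ^ p.toReal := by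
      refine NoFactAux.disjoint_sum_norm hr K v S ?_ ?_
      · intro k _ l _ hkl
        rcases lt_or_gt_of_ne hkl with h' | h'
        · exact hSdisj k l h'
        · exact (hSdisj l k h').symm
      · intro k _
        rw [hv]
        refine Finset.sum_congr rfl fun i hi => ?_
        congr 1
        rw [NoFactAux.trunc_apply, if_pos hi]
    have hVlow : (K:ℝ) * (c/2) ^ p.toReal ≤ ‖V‖ ^ p.toReal := by
      rw [hVnorm]
      have h1 : ∀ k ∈ Finset.range K, (c/2) ^ p.toReal ≤ ‖v k‖ ^ p.toReal := fun k _ =>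
        Real.rpow_le_rpow (by positivity) (hv_ge k) hr.le
      calc (K:ℝ) * (c/2) ^ p.toReal
          = (Finset.range K).card • ((c/2) ^ p.toReal) := by
            rw [Finset.card_range, nsmul_eq_mul]
        _ ≤ _ := Finset.card_nsmul_le_sum _ _ _ h1
    have hVhigh : ‖V‖ ^ p.toReal ≤ (K:ℝ) * (2*‖A‖+c) ^ p.toReal := by
      rw [hVnorm]
      have h1 : ∀ k ∈ Finset.range K, ‖v k‖ ^ p.toReal ≤ (2*‖A‖+c) ^ p.toReal := fun k _ =>
        Real.rpow_le_rpow (norm_nonneg _) (hv_le k) hr.le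
      calc ∑ k ∈ Finset.range K, ‖v k‖ ^ p.toReal
          ≤ (Finset.range K).card • ((2*‖A‖+c) ^ p.toReal) := Finset.sum_le_card_nsmul _ _ _ h1
        _ = (K:ℝ) * (2*‖A‖+c) ^ p.toReal := by rw [Finset.card_range, nsmul_eq_mul]
    obtain ⟨hV_ge, hV_le⟩ := NoFactAux3.sandwich hr (norm_nonneg V) (by positivity)
      (by positivity) K hVlow hVhigh
    -- ‖W - V‖ ≤ c/4
    have hWV : ‖W - V‖ ≤ c/4 := by
      have h1 : W - V = ∑ k ∈ Finset.range K, (w (m k) - v k) := by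
        rw [hW, hV, Finset.sum_sub_distrib]
      calc ‖W - V‖ = ‖∑ k ∈ Finset.range K, (w (m k) - v k)‖ := by rw [h1]
        _ ≤ ∑ k ∈ Finset.range K, ‖w (m k) - v k‖ := norm_sum_le _ _
        _ ≤ ∑ k ∈ Finset.range K, c/8 * (1/2:ℝ)^k := Finset.sum_le_sum fun k _ => happrox k
        _ = c/8 * ∑ k ∈ Finset.range K, (1/2:ℝ)^k := by rw [Finset.mul_sum]
        _ ≤ c/8 * 2 := by
            have := sum_geometric_two_le K
            nlinarith
        _ = c/4 := by ring
    have hWA : ‖W‖ ≤ ‖A‖ * ‖D‖ := by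
      rw [hWD]
      exact A.le_opNorm _
    have hDG : ‖D‖ ≤ ‖G‖ * ‖W‖ := by
      conv_lhs => rw [← hGW]
      exact G.le_opNorm _
    have hVW1 : ‖V‖ - ‖W‖ ≤ c/4 := by
      have h1 : ‖V‖ - ‖W‖ ≤ ‖W - V‖ := by
        rw [norm_sub_rev]
        exact norm_sub_norm_le _ _
      linarith
    have hVW2 : ‖W‖ - ‖V‖ ≤ c/4 := by
      have h1 : ‖W‖ - ‖V‖ ≤ ‖W - V‖ := norm_sub_norm_le _ _
      linarith
    constructor
    · have h1 : ‖W‖ ≤ ‖A‖ * (2 * (K:ℝ)^(1/q.toReal)) :=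
        hWA.trans (mul_le_mul_of_nonneg_left hD_le hA0)
      nlinarith [hV_ge]
    · have h1 : ‖W‖ ≤ (2*‖A‖+c) * (K:ℝ)^(1/p.toReal) + c/4 := by linarith [hV_le]
      calc (K:ℝ)^(1/q.toReal) ≤ ‖D‖ := hD_ge
        _ ≤ ‖G‖ * ‖W‖ := hDG
        _ ≤ ‖G‖ * ((2*‖A‖+c) * (K:ℝ)^(1/p.toReal) + c/4) :=
            mul_le_mul_of_nonneg_left h1 hG.le
  -- endgame
  rcases hrs.lt_or_gt with hlt | hlt
  · -- p.toReal < q.toReal : use first inequality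
    have hba : 1/q.toReal < 1/p.toReal := one_div_lt_one_div_of_lt hr hlt
    refine NoFactAux3.no_poly_bound (C := c⁻¹ * (4*‖A‖ + c)) (by positivity : 0 < 1/q.toReal)
      hba ?_
    intro K hK
    obtain ⟨h1, -⟩ := main K hK
    have hY0 : (0:ℝ) ≤ (K:ℝ)^(1/q.toReal) := Real.rpow_nonneg (Nat.cast_nonneg K) _
    have h6 : c * (K:ℝ)^(1/p.toReal) ≤ (4*‖A‖+c) * (K:ℝ)^(1/q.toReal) + (4*‖A‖+c) := by
      nlinarith [mul_nonneg hc0.le hY0]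
    have h7 : (K:ℝ)^(1/p.toReal) ≤ c⁻¹ * ((4*‖A‖+c) * (K:ℝ)^(1/q.toReal) + (4*‖A‖+c)) := by
      calc (K:ℝ)^(1/p.toReal) = c⁻¹ * (c * (K:ℝ)^(1/p.toReal)) := by
            field_simp
        _ ≤ c⁻¹ * ((4*‖A‖+c) * (K:ℝ)^(1/q.toReal) + (4*‖A‖+c)) :=
            mul_le_mul_of_nonneg_left h6 (inv_nonneg.2 hc0.le)
    calc (K:ℝ)^(1/p.toReal)
        ≤ c⁻¹ * ((4*‖A‖+c) * (K:ℝ)^(1/q.toReal) + (4*‖A‖+c)) := h7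
      _ = c⁻¹ * (4*‖A‖ + c) * (K:ℝ)^(1/q.toReal) + c⁻¹ * (4*‖A‖ + c) := by ring
  · -- q.toReal < p.toReal : use second inequality
    have hba : 1/p.toReal < 1/q.toReal := one_div_lt_one_div_of_lt hs hlt
    refine NoFactAux3.no_poly_bound (C := ‖G‖*(2*‖A‖+c) + ‖G‖*c/4)
      (by positivity : 0 < 1/p.toReal) hba ?_
    intro K hK
    obtain ⟨-, h2⟩ := main K hK
    have hX0 : (0:ℝ) ≤ (K:ℝ)^(1/p.toReal) := Real.rpow_nonneg (Nat.cast_nonneg K) _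
    calc (K:ℝ)^(1/q.toReal)
        ≤ ‖G‖ * ((2*‖A‖+c) * (K:ℝ)^(1/p.toReal) + c/4) := h2
      _ ≤ (‖G‖*(2*‖A‖+c) + ‖G‖*c/4) * (K:ℝ)^(1/p.toReal) + (‖G‖*(2*‖A‖+c) + ‖G‖*c/4) := by
          nlinarith [mul_nonneg (mul_nonneg hG.le hc0.le) hX0,
            mul_nonneg hG.le (by linarith : (0:ℝ) ≤ 2*‖A‖+c), mul_nonneg hG.le hA0]
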